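/- Let n ≥ 1, L > 0, μ ≤ 0, and let f : ℝⁿ → ℝ belong to F_{μ,L}. Assume f⋆ = inf f is finite and that f satisfies the PL inequality with constant μ_p, with 0 < μ_p ≤ L, on the sublevel set X = {x : f(x) ≤ f(x¹)} of a point x¹ ∈ ℝⁿ. Let t₁ ∈ [1/L, 3/(μ + L + √(μ² − Lμ + L²))] and x² = x¹ − t₁∇f(x¹). Then f(x²) − f⋆ ≤ ( ((L t₁ − 2)(μ t₁ − 2)μ_p t₁) / ((L + μ − μ_p)t₁ − 2) + 1 ) · (f(x¹) − f⋆). -/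

import Mathlib

open Set
open scoped RealInnerProductSpace

section Aux

variable {F : Type*} [NormedAddCommGroup F] [InnerProductSpace ℝ F] [CompleteSpace F]

private lemma line_hasDerivAt (x v : F) (s : ℝ) :
    HasDerivAt (fun s : ℝ => x + s • v) v s := by
  simpa using ((hasDerivAt_id s).smul_const v).const_add x

private lemma comp_line_hasDerivAt {φ : F → ℝ} {g : F} (x v : F)
    (hg : HasGradientAt φ g x) :
    HasDerivAt (fun s : ℝ => φ (x + s • v)) ⟪g, v⟫ 0 := by
  have h := hg.hasFDerivAt.comp_hasDerivAt_of_eq (0 : ℝ) (line_hasDerivAt x v 0) (by simp)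
  simpa [Function.comp_def, InnerProductSpace.toDual_apply_apply] using h

/-- 1-D convexity inequality along a segment. -/
private lemma convex_line_ineq {φ : F → ℝ} (hc : ConvexOn ℝ univ φ) (x y : F) {d : ℝ}
    (hd : HasDerivAt (fun s : ℝ => φ (x + s • (y - x))) d 0) :
    φ x + d ≤ φ y := by
  have hψc : ConvexOn ℝ univ (fun s : ℝ => φ (x + s • (y - x))) := by
    have h := hc.comp_affineMap (AffineMap.lineMap x y : ℝ →ᵃ[ℝ] F)
    have heq : (φ ∘ (AffineMap.lineMap x y : ℝ →ᵃ[ℝ] F)) =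
        fun s : ℝ => φ (x + s • (y - x)) := by
      funext s
      simp [AffineMap.lineMap_apply, Function.comp]
      congr 1
      abel
    rw [heq] at h
    simpa using h
  have hslope := hψc.le_slope_of_hasDerivAt (mem_univ (0 : ℝ)) (mem_univ (1 : ℝ)) one_pos hd
  rw [slope_def_field] at hslope
  have h0 : x + (0 : ℝ) • (y - x) = x := by module
  have h1 : x + (1 : ℝ) • (y - x) = y := by module
  rw [h0, h1] at hslope
  have : d ≤ φ y - φ x := by
    have := hslope
    field_simp at this
    linarith
  linarith

/-- Gradient inequality for a convex function. -/
private lemma convex_grad_ineq {φ : F → ℝ} {φ' : F → F} (hc : ConvexOn ℝ univ φ)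
    (hg : ∀ z, HasGradientAt φ (φ' z) z) (x y : F) :
    φ x + ⟪φ' x, y - x⟫ ≤ φ y := by
  exact convex_line_ineq hc x y (comp_line_hasDerivAt x (y - x) (hg x))

private lemma sq_norm_line_hasDerivAt (c : ℝ) (x v : F) :
    HasDerivAt (fun s : ℝ => c * ‖x + s • v‖ ^ 2) (c * (2 * ⟪x, v⟫)) 0 := by
  have h1 := ((line_hasDerivAt x v 0).inner ℝ (line_hasDerivAt x v 0))
  have heq : (fun s : ℝ => ⟪x + s • v, x + s • v⟫) = fun s : ℝ => ‖x + s • v‖ ^ 2 := by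
    funext s; rw [real_inner_self_eq_norm_sq]
  rw [heq] at h1
  have h2 := h1.const_mul c
  refine h2.congr_deriv ?_
  have h0 : x + (0 : ℝ) • v = x := by simp
  rw [h0, real_inner_comm v x]
  ring

/-- Descent lemma: upper quadratic bound from convexity of `K/2 ‖·‖² - φ`. -/
private lemma descent_lemma {φ : F → ℝ} {φ' : F → F} {K : ℝ}
    (hsm : ConvexOn ℝ univ (fun z => K / 2 * ‖z‖ ^ 2 - φ z))
    (hg : ∀ z, HasGradientAt φ (φ' z) z) (x y : F) :
    φ y ≤ φ x + ⟪φ' x, y - x⟫ + K / 2 * ‖y - x‖ ^ 2 := by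
  have hd : HasDerivAt (fun s : ℝ => K / 2 * ‖x + s • (y - x)‖ ^ 2 - φ (x + s • (y - x)))
      (K / 2 * (2 * ⟪x, y - x⟫) - ⟪φ' x, y - x⟫) 0 := by
    exact (sq_norm_line_hasDerivAt (K / 2) x (y - x)).sub
      (comp_line_hasDerivAt x (y - x) (hg x))
  have h := convex_line_ineq hsm x y hd
  have hny : ‖y - x‖ ^ 2 = ‖y‖ ^ 2 - 2 * ⟪y, x⟫ + ‖x‖ ^ 2 := norm_sub_sq_real y x
  have hi : ⟪x, y - x⟫ = ⟪x, y⟫ - ‖x‖ ^ 2 := by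
    rw [inner_sub_right, real_inner_self_eq_norm_sq]
  have hc : ⟪y, x⟫ = ⟪x, y⟫ := real_inner_comm x y
  have hiK : K * ⟪x, y - x⟫ = K * ⟪x, y⟫ - K * ‖x‖ ^ 2 := by rw [hi]; ring
  have hnyK : K * ‖y - x‖ ^ 2 = K * ‖y‖ ^ 2 - 2 * (K * ⟪x, y⟫) + K * ‖x‖ ^ 2 := by
    rw [hny, hc]; ring
  linarith [h, hiK, hnyK]

/-- Interpolation inequality for a convex `K`-smooth function, premultiplied by `2K`. -/
private lemma interp_lemma {φ : F → ℝ} {φ' : F → F} {K : ℝ} (hK : 0 < K)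
    (hc : ConvexOn ℝ univ φ)
    (hsm : ConvexOn ℝ univ (fun z => K / 2 * ‖z‖ ^ 2 - φ z))
    (hg : ∀ z, HasGradientAt φ (φ' z) z) (x y : F) :
    2 * K * (φ y + ⟪φ' y, x - y⟫) + ‖φ' x - φ' y‖ ^ 2 ≤ 2 * K * φ x := by
  set d : F := φ' x - φ' y with hd
  set z : F := x - K⁻¹ • d with hz
  have h1 : φ y + ⟪φ' y, z - y⟫ ≤ φ z := convex_grad_ineq hc hg y z
  have h2 : φ z ≤ φ x + ⟪φ' x, z - x⟫ + K / 2 * ‖z - x‖ ^ 2 := descent_lemma hsm hg x z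
  have hzx : z - x = -(K⁻¹ • d) := by rw [hz]; abel
  have hzy : z - y = (x - y) - K⁻¹ • d := by rw [hz]; abel
  have hn : ‖z - x‖ ^ 2 = K⁻¹ ^ 2 * ‖d‖ ^ 2 := by
    rw [hzx, norm_neg, norm_smul, mul_pow, Real.norm_eq_abs, sq_abs]
  have hi1 : ⟪φ' y, z - y⟫ = ⟪φ' y, x - y⟫ - K⁻¹ * ⟪φ' y, d⟫ := by
    rw [hzy, inner_sub_right, real_inner_smul_right]
  have hi2 : ⟪φ' x, z - x⟫ = -(K⁻¹ * ⟪φ' x, d⟫) := by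
    rw [hzx, inner_neg_right, real_inner_smul_right]
  have hdd : ⟪φ' x, d⟫ - ⟪φ' y, d⟫ = ‖d‖ ^ 2 := by
    rw [← inner_sub_left, ← hd, real_inner_self_eq_norm_sq]
  have hKne : K ≠ 0 := hK.ne'
  have e1 : K * K⁻¹ * ⟪φ' y, d⟫ = ⟪φ' y, d⟫ := by field_simp
  have e2 : K * K⁻¹ * ⟪φ' x, d⟫ = ⟪φ' x, d⟫ := by field_simp
  have e3 : K * K * (K⁻¹ ^ 2) * ‖d‖ ^ 2 = ‖d‖ ^ 2 := by field_simp
  have hchain : φ y + ⟪φ' y, z - y⟫ ≤ φ x + ⟪φ' x, z - x⟫ + K / 2 * ‖z - x‖ ^ 2 :=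
    le_trans h1 h2
  rw [hi1, hi2, hn] at hchain
  have hmul := mul_le_mul_of_nonneg_left hchain (by linarith : (0 : ℝ) ≤ 2 * K)
  nlinarith [hmul, e1, e2, e3, hdd]

/-- Gradient of `c * ‖·‖²`. -/
private lemma hasGradientAt_const_mul_sq (c : ℝ) (z : F) :
    HasGradientAt (fun x : F => c * ‖x‖ ^ 2) ((2 * c) • z) z := by
  have h1 := ((hasFDerivAt_id z).inner ℝ (hasFDerivAt_id z))
  have h2 := h1.const_mul c
  simp only [id_eq] at h2
  have heq : (fun x : F => c * ⟪x, x⟫) = fun x : F => c * ‖x‖ ^ 2 := by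
    funext w; rw [real_inner_self_eq_norm_sq]
  rw [heq] at h2
  rw [hasGradientAt_iff_hasFDerivAt]
  refine h2.congr_fderiv ?_
  apply ContinuousLinearMap.ext
  intro v
  simp [InnerProductSpace.toDual_apply_apply, real_inner_smul_left, fderivInnerCLM_apply,
    real_inner_comm]
  ring

end Aux

set_option maxHeartbeats 1600000 in
theorem stmt_1 (n : ℕ) (hn : 1 ≤ n)
    (f : EuclideanSpace ℝ (Fin n) → ℝ)
    (f' : EuclideanSpace ℝ (Fin n) → EuclideanSpace ℝ (Fin n))
    (L μ : ℝ) (hL : 0 < L) (hμ : μ ≤ 0)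
    (hgrad : ∀ x, HasGradientAt f (f' x) x)
    (hupper : ConvexOn ℝ univ (fun x => L / 2 * ‖x‖ ^ 2 - f x))
    (hlower : ConvexOn ℝ univ (fun x => f x - μ / 2 * ‖x‖ ^ 2))
    (fstar : ℝ) (hfstar : IsGLB (range f) fstar)
    (μp : ℝ) (hμp : 0 < μp) (hμpL : μp ≤ L)
    (x1 : EuclideanSpace ℝ (Fin n))
    (hPL : ∀ x, f x ≤ f x1 → f x - fstar ≤ 1 / (2 * μp) * ‖f' x‖ ^ 2)
    (t1 : ℝ)
    (ht1 : t1 ∈ Icc (1 / L) (3 / (μ + L + Real.sqrt (μ ^ 2 - L * μ + L ^ 2))))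
    (x2 : EuclideanSpace ℝ (Fin n)) (hx2 : x2 = x1 - t1 • f' x1) :
    f x2 - fstar ≤
      ((L * t1 - 2) * (μ * t1 - 2) * μp * t1 / ((L + μ - μp) * t1 - 2) + 1) *
        (f x1 - fstar) := by
  obtain ⟨ht1l, ht1u⟩ := ht1
  set R : ℝ := Real.sqrt (μ ^ 2 - L * μ + L ^ 2) with hR
  -- basic facts about t1
  have ht1pos : 0 < t1 := lt_of_lt_of_le (by positivity) ht1l
  have ha1 : 1 ≤ L * t1 := by
    rw [div_le_iff₀ hL] at ht1l; linarith [ht1l]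
  have hRarg : (0 : ℝ) ≤ μ ^ 2 - L * μ + L ^ 2 := by nlinarith
  have hRsq : R ^ 2 = μ ^ 2 - L * μ + L ^ 2 := Real.sq_sqrt hRarg
  have hRge : L / 2 - μ ≤ R := by
    have h := Real.sqrt_le_sqrt (show (L / 2 - μ) ^ 2 ≤ μ ^ 2 - L * μ + L ^ 2 by nlinarith)
    rwa [Real.sqrt_sq (by linarith)] at h
  have hspos : 0 < μ + L + R := by linarith
  have hts : t1 * (μ + L + R) ≤ 3 := by
    rw [le_div_iff₀ hspos] at ht1u; linarith
  have hLt2 : L * t1 ≤ 2 := by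
    have h23 : t1 ≤ 2 / L := by
      have : 3 * L / 2 ≤ μ + L + R := by linarith
      calc t1 ≤ 3 / (μ + L + R) := ht1u
        _ ≤ 3 / (3 * L / 2) := by
            apply div_le_div_of_nonneg_left (by norm_num) (by positivity) this
        _ = 2 / L := by field_simp
    rw [le_div_iff₀ hL] at h23; linarith
  -- the quadratic factor q(t) ≥ 0
  have hfac : 0 ≤ μ * L * t1 - (L + μ) + R := by
    have hml : 0 ≤ μ * L * (t1 * (μ + L + R) - 3) := by
      have h := mul_nonneg (show (0:ℝ) ≤ -(μ * L) by nlinarith)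
        (show (0:ℝ) ≤ 3 - t1 * (μ + L + R) by linarith)
      nlinarith [h]
    have hsmul : 0 ≤ (μ + L + R) * (μ * L * t1 - (L + μ) + R) := by nlinarith [hRsq]
    nlinarith [hsmul, hspos]
  have hq : 0 ≤ μ * L * t1 ^ 2 - 2 * (L + μ) * t1 + 3 := by
    nlinarith [mul_nonneg ht1pos.le hfac, hts]
  -- K and positivity
  have hK : (0 : ℝ) < L - μ := by linarith
  -- gradient of h = f - μ/2 ‖·‖²
  set φ : EuclideanSpace ℝ (Fin n) → ℝ := fun z => f z - μ / 2 * ‖z‖ ^ 2 with hφ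
  set φ' : EuclideanSpace ℝ (Fin n) → EuclideanSpace ℝ (Fin n) :=
    fun z => f' z - μ • z with hφ'
  have hgφ : ∀ z, HasGradientAt φ (φ' z) z := by
    intro z
    have hsq := hasGradientAt_const_mul_sq (μ / 2) z
    rw [show 2 * (μ / 2) = μ by ring] at hsq
    have h := (hgrad z).hasFDerivAt.sub hsq.hasFDerivAt
    rw [hasGradientAt_iff_hasFDerivAt, hφ', map_sub]
    exact h
  have hsmφ : ConvexOn ℝ univ (fun z => (L - μ) / 2 * ‖z‖ ^ 2 - φ z) := by
    have heq : (fun z : EuclideanSpace ℝ (Fin n) => (L - μ) / 2 * ‖z‖ ^ 2 - φ z) =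
        fun z => L / 2 * ‖z‖ ^ 2 - f z := by
      funext z; simp only [hφ]; ring
    rw [heq]; exact hupper
  -- the two interpolation inequalities
  have i1 := interp_lemma hK hlower hsmφ hgφ x2 x1
  have i2 := interp_lemma hK hlower hsmφ hgφ x1 x2
  -- vector identities
  have hd21 : x2 - x1 = (-t1) • f' x1 := by rw [hx2]; module
  have hd12 : x1 - x2 = t1 • f' x1 := by rw [hx2]; module
  have hmux2 : μ • x2 = μ • x1 - (μ * t1) • f' x1 := by rw [hx2]; module
  have hgdiff : φ' x2 - φ' x1 = f' x2 - (1 - μ * t1) • f' x1 := by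
    simp only [hφ']
    rw [hmux2]; module
  -- scalar expansions
  have hS1 : ⟪φ' x1, x2 - x1⟫ = -(t1 * ‖f' x1‖ ^ 2) + μ * t1 * ⟪x1, f' x1⟫ := by
    simp only [hφ']
    rw [hd21, inner_sub_left, real_inner_smul_right, real_inner_smul_right,
      real_inner_smul_left, real_inner_self_eq_norm_sq]
    ring
  have hx2v : ⟪x2, f' x1⟫ = ⟪x1, f' x1⟫ - t1 * ‖f' x1‖ ^ 2 := by
    rw [hx2, inner_sub_left, real_inner_smul_left, real_inner_self_eq_norm_sq]
  have hS2 : ⟪φ' x2, x1 - x2⟫ =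
      t1 * ⟪f' x2, f' x1⟫ - μ * t1 * (⟪x1, f' x1⟫ - t1 * ‖f' x1‖ ^ 2) := by
    simp only [hφ']
    rw [hd12, inner_sub_left, real_inner_smul_right, real_inner_smul_right,
      real_inner_smul_left, hx2v]
    ring
  have hS4 : ‖f' x2 - (1 - μ * t1) • f' x1‖ ^ 2 =
      ‖f' x2‖ ^ 2 - 2 * (1 - μ * t1) * ⟪f' x2, f' x1⟫ + (1 - μ * t1) ^ 2 * ‖f' x1‖ ^ 2 := by
    rw [norm_sub_sq_real, real_inner_smul_right, norm_smul, mul_pow, Real.norm_eq_abs, sq_abs]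
    ring
  have hS5 : ‖x2‖ ^ 2 = ‖x1‖ ^ 2 - 2 * t1 * ⟪x1, f' x1⟫ + t1 ^ 2 * ‖f' x1‖ ^ 2 := by
    rw [hx2, norm_sub_sq_real, real_inner_smul_right, norm_smul, mul_pow, Real.norm_eq_abs,
      sq_abs]
    ring
  -- rewrite i1, i2 into scalar form
  rw [hgdiff, hS4, hS1] at i1
  have hgdiff2 : φ' x1 - φ' x2 = -(f' x2 - (1 - μ * t1) • f' x1) := by
    rw [← hgdiff]; abel
  rw [hgdiff2, norm_neg, hS4, hS2] at i2
  simp only [hφ, hS5] at i1 i2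
  -- descent: f x2 ≤ f x1
  have hdesc : f x2 ≤ f x1 + ⟪f' x1, x2 - x1⟫ + L / 2 * ‖x2 - x1‖ ^ 2 :=
    descent_lemma hupper hgrad x1 x2
  have hvd : ⟪f' x1, x2 - x1⟫ = -(t1 * ‖f' x1‖ ^ 2) := by
    rw [hd21, real_inner_smul_right, real_inner_self_eq_norm_sq]; ring
  have hnd : ‖x2 - x1‖ ^ 2 = t1 ^ 2 * ‖f' x1‖ ^ 2 := by
    rw [hd21, norm_smul, mul_pow, Real.norm_eq_abs, sq_abs]; ring
  rw [hvd, hnd] at hdesc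
  have hvsq : (0 : ℝ) ≤ ‖f' x1‖ ^ 2 := by positivity
  have hf21 : f x2 ≤ f x1 := by
    have hprod : (0 : ℝ) ≤ t1 * ‖f' x1‖ ^ 2 * (2 - L * t1) :=
      mul_nonneg (mul_nonneg ht1pos.le hvsq) (by linarith only [hLt2] : (0 : ℝ) ≤ 2 - L * t1)
    linarith only [hdesc, hprod]
  -- PL inequalities, cleared of denominators
  have h2μp : (0 : ℝ) < 2 * μp := by linarith
  have e3 : (f x1 - fstar) * (2 * μp) ≤ ‖f' x1‖ ^ 2 := by
    have h := hPL x1 le_rfl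
    rw [one_div, inv_mul_eq_div, le_div_iff₀ h2μp] at h
    exact h
  have e4 : (f x2 - fstar) * (2 * μp) ≤ ‖f' x2‖ ^ 2 := by
    have h := hPL x2 hf21
    rw [one_div, inv_mul_eq_div, le_div_iff₀ h2μp] at h
    exact h
  -- multipliers
  have hm1 : (0 : ℝ) ≤ L * t1 - 1 := by linarith
  have hm2 : (0 : ℝ) ≤ 1 - μ * t1 := by
    have h := mul_nonneg (by linarith only [hμ] : (0 : ℝ) ≤ -μ) ht1pos.le
    linarith only [h]
  have hm3 : (0 : ℝ) ≤ t1 * (L - μ) * (μ * L * t1 ^ 2 - 2 * (L + μ) * t1 + 3) :=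
    mul_nonneg (mul_nonneg ht1pos.le hK.le) hq
  have hm4 : (0 : ℝ) ≤ t1 * (L - μ) := mul_nonneg ht1pos.le hK.le
  have P1 : (0 : ℝ) ≤ (L * t1 - 1) *
      (2 * (L - μ) * (f x2 - μ / 2 * (‖x1‖ ^ 2 - 2 * t1 * ⟪x1, f' x1⟫ + t1 ^ 2 * ‖f' x1‖ ^ 2)) -
        (2 * (L - μ) * (f x1 - μ / 2 * ‖x1‖ ^ 2 + (-(t1 * ‖f' x1‖ ^ 2) + μ * t1 * ⟪x1, f' x1⟫)) +
          (‖f' x2‖ ^ 2 - 2 * (1 - μ * t1) * ⟪f' x2, f' x1⟫ + (1 - μ * t1) ^ 2 * ‖f' x1‖ ^ 2))) :=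
    mul_nonneg hm1 (by linarith only [i1])
  have P2 : (0 : ℝ) ≤ (1 - μ * t1) *
      (2 * (L - μ) * (f x1 - μ / 2 * ‖x1‖ ^ 2) -
        (2 * (L - μ) * (f x2 - μ / 2 * (‖x1‖ ^ 2 - 2 * t1 * ⟪x1, f' x1⟫ + t1 ^ 2 * ‖f' x1‖ ^ 2) +
            (t1 * ⟪f' x2, f' x1⟫ - μ * t1 * (⟪x1, f' x1⟫ - t1 * ‖f' x1‖ ^ 2))) +
          (‖f' x2‖ ^ 2 - 2 * (1 - μ * t1) * ⟪f' x2, f' x1⟫ + (1 - μ * t1) ^ 2 * ‖f' x1‖ ^ 2))) :=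
    mul_nonneg hm2 (by linarith only [i2])
  have P3 : (0 : ℝ) ≤ (t1 * (L - μ) * (μ * L * t1 ^ 2 - 2 * (L + μ) * t1 + 3)) *
      (‖f' x1‖ ^ 2 - (f x1 - fstar) * (2 * μp)) :=
    mul_nonneg hm3 (by linarith only [e3])
  have P4 : (0 : ℝ) ≤ (t1 * (L - μ)) * (‖f' x2‖ ^ 2 - (f x2 - fstar) * (2 * μp)) :=
    mul_nonneg hm4 (by linarith only [e4])
  have hsum := add_nonneg (add_nonneg (add_nonneg P1 P2) P3) P4
  -- the certificate identity
  have hid : (L * t1 - 1) *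
      (2 * (L - μ) * (f x2 - μ / 2 * (‖x1‖ ^ 2 - 2 * t1 * ⟪x1, f' x1⟫ + t1 ^ 2 * ‖f' x1‖ ^ 2)) -
        (2 * (L - μ) * (f x1 - μ / 2 * ‖x1‖ ^ 2 + (-(t1 * ‖f' x1‖ ^ 2) + μ * t1 * ⟪x1, f' x1⟫)) +
          (‖f' x2‖ ^ 2 - 2 * (1 - μ * t1) * ⟪f' x2, f' x1⟫ + (1 - μ * t1) ^ 2 * ‖f' x1‖ ^ 2))) +
      (1 - μ * t1) *
      (2 * (L - μ) * (f x1 - μ / 2 * ‖x1‖ ^ 2) -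
        (2 * (L - μ) * (f x2 - μ / 2 * (‖x1‖ ^ 2 - 2 * t1 * ⟪x1, f' x1⟫ + t1 ^ 2 * ‖f' x1‖ ^ 2) +
            (t1 * ⟪f' x2, f' x1⟫ - μ * t1 * (⟪x1, f' x1⟫ - t1 * ‖f' x1‖ ^ 2))) +
          (‖f' x2‖ ^ 2 - 2 * (1 - μ * t1) * ⟪f' x2, f' x1⟫ + (1 - μ * t1) ^ 2 * ‖f' x1‖ ^ 2))) +
      (t1 * (L - μ) * (μ * L * t1 ^ 2 - 2 * (L + μ) * t1 + 3)) *
        (‖f' x1‖ ^ 2 - (f x1 - fstar) * (2 * μp)) +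
      (t1 * (L - μ)) * (‖f' x2‖ ^ 2 - (f x2 - fstar) * (2 * μp)) =
      2 * (L - μ) *
        ((2 + μp * t1 - L * t1 - μ * t1 - μp * t1 * (L * t1 - 2) * (μ * t1 - 2)) *
            (f x1 - fstar) -
          (2 + μp * t1 - L * t1 - μ * t1) * (f x2 - fstar)) := by
    ring
  rw [hid] at hsum
  have hX : (0 : ℝ) ≤
      (2 + μp * t1 - L * t1 - μ * t1 - μp * t1 * (L * t1 - 2) * (μ * t1 - 2)) *
          (f x1 - fstar) -
        (2 + μp * t1 - L * t1 - μ * t1) * (f x2 - fstar) := by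
    have h2K : (0 : ℝ) < 2 * (L - μ) := by linarith only [hK]
    exact nonneg_of_mul_nonneg_right hsum h2K
  -- conclude
  have hD : (0 : ℝ) < 2 + μp * t1 - L * t1 - μ * t1 := by
    have h1 : (0 : ℝ) < (μp - μ) * t1 := mul_pos (by linarith only [hμ, hμp]) ht1pos
    linarith only [h1, hLt2]
  have hden : (L + μ - μp) * t1 - 2 = -(2 + μp * t1 - L * t1 - μ * t1) := by ring
  have hdenne : (L + μ - μp) * t1 - 2 ≠ 0 := by
    rw [hden]; exact neg_ne_zero.mpr hD.ne'
  have hrw : (L * t1 - 2) * (μ * t1 - 2) * μp * t1 / ((L + μ - μp) * t1 - 2) + 1 =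
      (2 + μp * t1 - L * t1 - μ * t1 - μp * t1 * (L * t1 - 2) * (μ * t1 - 2)) /
        (2 + μp * t1 - L * t1 - μ * t1) := by
    rw [div_add_one hdenne, div_eq_div_iff hdenne hD.ne']
    ring
  rw [hrw, div_mul_eq_mul_div, le_div_iff₀ hD]
  linarith only [hX]
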